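/- A regular category with cokernels is normal (i.e., every regular epimorphism is a normal epimorphism) if and only if every morphism whose kernel is zero is a monomorphism. -/

import Mathlib

open CategoryTheory CategoryTheory.Limits

universe v u

noncomputable section

/-- A pointed regular category with cokernels is normal (every regular epimorphism is a
normal epimorphism) if and only if every morphism whose kernel is zero is a monomorphism. -/
theorem stmt5 {C : Type u} [Category.{v} C] [HasZeroObject C] [HasZeroMorphisms C]
    [HasFiniteLimits C] [HasCokernels C]
    -- regularity: coequalizers of kernel pairs exist
    (hcoeq : ∀ {A B : C} (f : A ⟶ B), HasCoequalizer (pullback.fst f f) (pullback.snd f f))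
    -- regularity: regular epimorphisms are stable under pullback
    (hstab : ∀ {A B A' : C} (f : A ⟶ B) (g : A' ⟶ B),
      Nonempty (RegularEpi f) → Nonempty (RegularEpi (pullback.snd f g))) :
    (∀ {A B : C} (f : A ⟶ B), Nonempty (RegularEpi f) → Nonempty (NormalEpi f)) ↔
      (∀ {A B : C} (f : A ⟶ B), IsZero (kernel f) → Mono f) := by
  constructor
  · -- normal → zero kernel implies mono
    intro hnorm A B f hf
    haveI := hcoeq f
    let a := pullback.fst f f
    let b := pullback.snd f f
    let e : A ⟶ coequalizer a b := coequalizer.π a b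
    obtain ⟨ne⟩ := hnorm e ⟨coequalizerRegular a b⟩
    let m : coequalizer a b ⟶ B := coequalizer.desc f pullback.condition
    have hem : e ≫ m = f := coequalizer.π_desc f _
    have hk : kernel.ι e ≫ f = 0 := by
      calc kernel.ι e ≫ f = kernel.ι e ≫ e ≫ m := by rw [hem]
        _ = 0 := by rw [kernel.condition_assoc, zero_comp]
    have hι : kernel.ι e = 0 := by
      rw [← kernel.lift_ι f (kernel.ι e) hk, hf.eq_zero_of_tgt (kernel.lift f (kernel.ι e) hk),
        zero_comp]
    have hze : IsZero (kernel e) := IsZero.of_mono_eq_zero _ hι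
    have hg : ne.g = 0 := by
      rw [← kernel.lift_ι e ne.g ne.w, hze.eq_zero_of_tgt (kernel.lift e ne.g ne.w), zero_comp]
    obtain ⟨t, ht⟩ := CokernelCofork.IsColimit.desc' ne.isColimit (𝟙 A) (by rw [hg, zero_comp])
    have ht' : (e ≫ t : A ⟶ A) = 𝟙 A := ht
    haveI : Epi e := coequalizer.π_epi
    have het : t ≫ e = 𝟙 _ := by
      rw [← cancel_epi e, ← Category.assoc, ht']
      simp
    haveI : IsIso e := ⟨t, ht', het⟩
    have hab : a = b := by
      have := coequalizer.condition a b
      exact (cancel_mono e).1 this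
    constructor
    intro Z u v huv
    have h1 : pullback.lift u v huv ≫ a = u := pullback.lift_fst u v huv
    have h2 : pullback.lift u v huv ≫ b = v := pullback.lift_snd u v huv
    calc u = pullback.lift u v huv ≫ a := h1.symm
      _ = pullback.lift u v huv ≫ b := by rw [hab]
      _ = v := h2
  · -- zero kernel implies mono → normal
    intro hmono A B f hf
    obtain ⟨rf⟩ := hf
    haveI : RegularEpi f := rf
    let k : kernel f ⟶ A := kernel.ι f
    let q : A ⟶ cokernel k := cokernel.π k
    let u : cokernel k ⟶ B := cokernel.desc k f (kernel.condition f)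
    have hqu : q ≫ u = f := cokernel.π_desc k f _
    have hkq : k ≫ q = 0 := cokernel.condition k
    haveI : RegularEpi q :=
      { W := kernel f
        left := k
        right := 0
        w := by rw [hkq, zero_comp]
        isColimit := cokernelIsCokernel k }
    let ι : kernel u ⟶ cokernel k := kernel.ι u
    have hιu : ι ≫ u = 0 := kernel.condition u
    obtain ⟨rp⟩ := hstab q ι ⟨this⟩
    haveI := rp
    haveI : Epi (pullback.snd q ι) := RegularEpi.epi _ rp
    have h1 : pullback.fst q ι ≫ f = 0 := by
      calc pullback.fst q ι ≫ f = pullback.fst q ι ≫ q ≫ u := by rw [hqu]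
        _ = (pullback.fst q ι ≫ q) ≫ u := (Category.assoc _ _ _).symm
        _ = (pullback.snd q ι ≫ ι) ≫ u := by rw [pullback.condition]
        _ = pullback.snd q ι ≫ ι ≫ u := Category.assoc _ _ _
        _ = 0 := by rw [hιu, comp_zero]
    have h2 : pullback.snd q ι ≫ ι = 0 := by
      calc pullback.snd q ι ≫ ι = pullback.fst q ι ≫ q := (pullback.condition).symm
        _ = (kernel.lift f (pullback.fst q ι) h1 ≫ k) ≫ q := by
              rw [kernel.lift_ι f (pullback.fst q ι) h1]
        _ = kernel.lift f (pullback.fst q ι) h1 ≫ k ≫ q := Category.assoc _ _ _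
        _ = 0 := by rw [hkq, comp_zero]
    have hι : ι = 0 := by
      rw [← cancel_epi (pullback.snd q ι), h2, comp_zero]
    have hzu : IsZero (kernel u) := IsZero.of_mono_eq_zero _ hι
    haveI : Mono u := hmono u hzu
    haveI : StrongEpi f := @strongEpi_of_effectiveEpi _ _ _ _ f (RegularEpi.effectiveEpi rf)
    have sq : CommSq q f u (𝟙 B) := ⟨by rw [hqu, Category.comp_id]⟩
    have ht2 : sq.lift ≫ u = 𝟙 B := sq.fac_right
    have ht3 : u ≫ sq.lift = 𝟙 _ := by
      rw [← cancel_mono u, Category.assoc, ht2, Category.comp_id, Category.id_comp]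
    haveI : IsIso u := ⟨sq.lift, ht3, ht2⟩
    haveI : Epi f := RegularEpi.epi f rf
    have hfac : ∀ {Z' : C} (g' : A ⟶ Z') (eq' : k ≫ g' = 0),
        f ≫ (inv u ≫ cokernel.desc k g' eq') = g' := by
      intro Z' g' eq'
      calc f ≫ inv u ≫ cokernel.desc k g' eq'
          = (q ≫ u) ≫ inv u ≫ cokernel.desc k g' eq' := by rw [hqu]
        _ = q ≫ cokernel.desc k g' eq' := by
              rw [Category.assoc, IsIso.hom_inv_id_assoc]
        _ = g' := cokernel.π_desc k g' eq'
    refine ⟨{ W := kernel f, g := k, w := kernel.condition f, isColimit := ?_ }⟩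
    refine CokernelCofork.IsColimit.ofπ f (kernel.condition f)
      (fun {Z'} g' hg' => inv u ≫ cokernel.desc k g' hg') (fun g' eq' => hfac g' eq') ?_
    intro Z' g' eq' m hm
    show m = inv u ≫ cokernel.desc k g' eq'
    rw [← cancel_epi f, hm, hfac g' eq']
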